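/- For any coprime integers a and b with b ≥ 1, one has max_{0 ≤ N < b} P_N(a/b) ≥ b. -/

import Mathlib

open Complex Real Finset

/-- `|1 - e^{iθ}| = |2 sin(θ/2)|`. -/
lemma abs_one_sub_exp (θ : ℝ) :
    ‖1 - Complex.exp (θ * Complex.I)‖ = |2 * Real.sin (θ / 2)| := by
  have h : (1 : ℂ) - Complex.exp (θ * Complex.I)
      = Complex.ofReal (1 - Real.cos θ) + Complex.ofReal (-Real.sin θ) * Complex.I := by
    rw [Complex.exp_mul_I]
    push_cast [← Complex.ofReal_cos, ← Complex.ofReal_sin]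
    ring
  rw [h, Complex.norm_def, Complex.normSq_add_mul_I]
  rw [abs_mul, show |(2:ℝ)| = 2 from abs_of_nonneg (by norm_num), Real.abs_sin_half]
  rw [show (1 - Real.cos θ) ^ 2 + (-Real.sin θ) ^ 2 = 4 * ((1 - Real.cos θ) / 2) by
    have := Real.sin_sq_add_cos_sq θ; ring_nf; nlinarith]
  rw [show (4 : ℝ) = 2 ^ 2 by norm_num, Real.sqrt_mul (by positivity),
    Real.sqrt_sq (by norm_num)]

/-- The Sudler product `P_N(α) = ∏_{n=1}^N |2 sin(π n α)|`. -/
noncomputable def sudler (N : ℕ) (α : ℝ) : ℝ :=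
  ∏ n ∈ Finset.Icc 1 N, |2 * Real.sin (Real.pi * n * α)|

/-- `max_{0 ≤ N < b} P_N(a/b) ≥ b`. -/
theorem sudler_max_ge (a b : ℤ) (hb : 1 ≤ b) (hab : IsCoprime a b)
    (hne : (Finset.range b.toNat).Nonempty) :
    (b : ℝ) ≤ (Finset.range b.toNat).sup' hne (fun N => sudler N ((a : ℝ) / b)) := by
  set b' := b.toNat with hb'def
  have hb'pos : 0 < b' := by omega
  have hbb : ((b' : ℤ)) = b := Int.toNat_of_nonneg (by omega)
  set r := (a % b).toNat with hrdef
  have hr : ((r : ℤ)) = a % b := Int.toNat_of_nonneg (Int.emod_nonneg a (by omega))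
  have hcop : Nat.Coprime r b' := by
    have h1 : IsCoprime (a % b) b := by
      have := hab.add_mul_left_left (-(a / b))
      rwa [show a + b * -(a / b) = a % b by rw [Int.emod_def]; ring] at this
    have h2 : Int.gcd (a % b) b = 1 := Int.isCoprime_iff_gcd_eq_one.mp h1
    rwa [← hr, ← hbb, Int.gcd_natCast_natCast] at h2
  set μ := Complex.exp (2 * Real.pi * Complex.I * (r / b')) with hμdef
  have hμ : IsPrimitiveRoot μ b' :=
    Complex.isPrimitiveRoot_exp_of_coprime r b' hb'pos.ne' hcop
  obtain ⟨n, hn⟩ : ∃ n, b' = n + 1 := ⟨b' - 1, by omega⟩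
  have hprod : ∏ k ∈ range n, (1 - μ ^ (k + 1)) = ((b' : ℂ)) := by
    have h := (hn ▸ hμ : IsPrimitiveRoot μ (n + 1)).prod_one_sub_pow_eq_order
    rw [h, hn]; push_cast; ring
  have hpow : ∀ m : ℕ, ‖1 - μ ^ m‖ = |2 * Real.sin (Real.pi * r * m / b')| := by
    intro m
    rw [hμdef, ← Complex.exp_nat_mul,
      show (m : ℂ) * (2 * Real.pi * Complex.I * (r / b'))
        = ((2 * Real.pi * r * m / b' : ℝ) : ℂ) * Complex.I by push_cast; ring,
      abs_one_sub_exp]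
    congr 2
    ring
  have habs : ∏ k ∈ range n, |2 * Real.sin (Real.pi * r * (k + 1) / b')| = (b' : ℝ) := by
    have h := congrArg (norm : ℂ → ℝ) hprod
    rw [Complex.norm_prod] at h
    simp only [hpow] at h
    rw [Complex.norm_natCast] at h
    exact_mod_cast h
  -- relate sin at a/b and at r/b'
  have hsin : ∀ m : ℕ, |2 * Real.sin (Real.pi * m * ((a : ℝ) / b))|
      = |2 * Real.sin (Real.pi * r * m / b')| := by
    intro m
    have hZ : a = b * (a / b) + (r : ℤ) := by rw [hr, Int.emod_def]; ring
    have hq : (a : ℝ) = (b : ℝ) * ((a / b : ℤ) : ℝ) + (r : ℝ) := by exact_mod_cast hZ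
    have hbne : (b : ℝ) ≠ 0 := Int.cast_ne_zero.mpr (by omega)
    have hb'' : (b' : ℝ) = (b : ℝ) := by exact_mod_cast hbb
    have hsplit : Real.pi * m * ((a : ℝ) / b)
        = Real.pi * r * m / b' + ((m : ℤ) * (a / b) : ℤ) * Real.pi := by
      rw [hq, hb'']; push_cast; field_simp; ring
    rw [hsplit, Real.sin_add_int_mul_pi, abs_mul, abs_mul, abs_mul, show |(-1 : ℝ) ^ ((m : ℤ) * (a / b))| = 1 by
        rcases Int.even_or_odd ((m : ℤ) * (a / b)) with h | h
        · rw [h.neg_one_zpow]; norm_num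
        · rw [h.neg_one_zpow]; norm_num]
    rw [one_mul]
  have hsud : sudler n ((a : ℝ) / b) = (b' : ℝ) := by
    rw [sudler, ← Finset.Ico_add_one_right_eq_Icc, Finset.prod_Ico_eq_prod_range,
      show n + 1 - 1 = n from rfl, ← habs]
    refine Finset.prod_congr rfl fun k _ => ?_
    rw [hsin (1 + k)]
    push_cast
    ring_nf
  calc (b : ℝ) = (b' : ℝ) := by exact_mod_cast hbb.symm
    _ = sudler n ((a : ℝ) / b) := hsud.symm
    _ ≤ _ := Finset.le_sup' (fun N => sudler N ((a : ℝ) / b))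
        (Finset.mem_range.mpr (show n < b.toNat by omega))
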